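/- Let n ≥ 1 and let L'_S(n) be the 4n×4n real symmetric matrix with diagonal entries 4 at positions j ≡ 0 or 1 (mod 4) and 2 at positions j ≡ 2 or 3 (mod 4), entries −1 on the sub- and super-diagonal, corner entries (L'_S)_{1,4n} = (L'_S)_{4n,1} = −1, and all other entries 0. Let μ = 15 + 4√14 and ν = 15 − 4√14. Then L'_S(n) is positive definite (all its eigenvalues λ_1, …, λ_{4n} are positive) and the sum of the reciprocals of its eigenvalues satisfies ∑_{j=1}^{4n} 1/λ_j = (9n√14/14) · (μ^n − ν^n)/(μ^n + ν^n − 2). -/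

import Mathlib

noncomputable def mu : ℝ := 15 + 4 * Real.sqrt 14
noncomputable def nu : ℝ := 15 - 4 * Real.sqrt 14

/-- The matrix `L_S(n)`: 4n×4n, diagonal entries 4 at (1-indexed) positions ≡ 0,1 (mod 4)
and 2 at positions ≡ 2,3 (mod 4), −1 on the sub/super-diagonal, −1 in the corners. -/
def LS' (n : ℕ) : Matrix (Fin (4 * n)) (Fin (4 * n)) ℝ :=
  Matrix.of fun i j =>
    if i.val = j.val then
      (if (i.val + 1) % 4 = 0 ∨ (i.val + 1) % 4 = 1 then 4 else 2)
    else if i.val + 1 = j.val ∨ j.val + 1 = i.val then -1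
    else if (i.val = 0 ∧ j.val = 4 * n - 1) ∨ (j.val = 0 ∧ i.val = 4 * n - 1) then -1
    else 0

namespace Stmt9

/-- diagonal entry at (0-indexed) site `s`. -/
noncomputable def a (s : ℕ) : ℝ := if s % 4 = 3 ∨ s % 4 = 0 then 4 else 2

/-- `D s k` : determinant of the tridiagonal path with sites `s, s+1, …, s+k-1`. -/
noncomputable def D (s : ℕ) : ℕ → ℝ
  | 0 => 1
  | 1 => a s
  | (k+2) => a (s+k+1) * D s (k+1) - D s k

/-- Chebyshev-like sequence for `x² - 30x + 1`. -/
noncomputable def u : ℕ → ℝ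
  | 0 => 0
  | 1 => 1
  | (m+2) => 30 * u (m+1) - u m

lemma two_step {P : ℕ → Prop} (h0 : P 0) (h1 : P 1)
    (ih : ∀ k, P k → P (k+1) → P (k+2)) : ∀ k, P k := by
  have h : ∀ k, P k ∧ P (k+1) := by
    intro k
    induction k with
    | zero => exact ⟨h0, h1⟩
    | succ k hk => exact ⟨hk.2, ih k hk.1 hk.2⟩
  exact fun k => (h k).1

lemma a_congr {s t : ℕ} (h : s % 4 = t % 4) : a s = a t := by
  unfold a; rw [h]

lemma D_step (s k : ℕ) : D s (k+2) = a (s+k+1) * D s (k+1) - D s k := rfl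

lemma D_one (s : ℕ) : D s 1 = a s := rfl

lemma D_congr {s t : ℕ} (h : s % 4 = t % 4) : ∀ k, D s k = D t k := by
  refine two_step ?_ ?_ ?_
  · rfl
  · exact a_congr h
  · intro k ih1 ih2
    rw [D_step, D_step, ih1, ih2, a_congr (show (s+k+1) % 4 = (t+k+1) % 4 by omega)]

lemma D_left (s : ℕ) : ∀ k, D s (k+2) = a s * D (s+1) (k+1) - D (s+2) k := by
  refine two_step ?_ ?_ ?_
  · show D s 2 = a s * D (s+1) 1 - D (s+2) 0
    rw [D_step, D_one, D_one]
    show a (s+1) * a s - 1 = a s * a (s+1) - 1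
    ring
  · show D s 3 = a s * D (s+1) 2 - D (s+2) 1
    show D s 3 = a s * D (s+1) 2 - D (s+2) 1
    simp only [D]
    ring_nf
  · intro k ih1 ih2
    have e1 : D s (k+4) = a (s+k+3) * D s (k+3) - D s (k+2) := by
      have h := D_step s (k+2)
      rw [show s+(k+2)+1 = s+k+3 by ring] at h
      rw [show k+4 = k+2+2 by ring]
      exact h
    have e2 : D (s+1) (k+3) = a (s+k+3) * D (s+1) (k+2) - D (s+1) (k+1) := by
      have h := D_step (s+1) (k+1)
      rw [show s+1+(k+1)+1 = s+k+3 by ring] at h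
      rw [show k+3 = k+1+2 by ring]
      exact h
    have e3 : D (s+2) (k+2) = a (s+k+3) * D (s+2) (k+1) - D (s+2) k := by
      have h := D_step (s+2) k
      rw [show s+2+k+1 = s+k+3 by ring] at h
      exact h
    show D s (k+4) = a s * D (s+1) (k+3) - D (s+2) (k+2)
    rw [e1, e2, e3, ih1, ih2]
    ring

lemma Drec (s : ℕ) : ∀ k, D s (k+8) = 30 * D s (k+4) - D s k := by
  refine two_step ?_ ?_ ?_
  · have h := D_congr (show s % 4 = (s % 4) % 4 by omega)
    rw [h 8, h 4, h 0]
    have hr : s % 4 < 4 := Nat.mod_lt _ (by norm_num)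
    set r := s % 4 with hrdef
    clear_value r
    interval_cases r <;> norm_num [D, a]
  · have h := D_congr (show s % 4 = (s % 4) % 4 by omega)
    rw [show (1:ℕ)+8 = 9 by ring, show (1:ℕ)+4 = 5 by ring, h 9, h 5, h 1]
    have hr : s % 4 < 4 := Nat.mod_lt _ (by norm_num)
    set r := s % 4 with hrdef
    clear_value r
    interval_cases r <;> norm_num [D, a]
  · intro k ih1 ih2
    have e1 : D s (k+10) = a (s+k+1) * D s (k+9) - D s (k+8) := by
      have h := D_step s (k+8)
      rw [a_congr (show (s+(k+8)+1) % 4 = (s+k+1) % 4 by omega)] at h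
      rw [show k+10 = k+8+2 by ring]
      exact h
    have e2 : D s (k+6) = a (s+k+1) * D s (k+5) - D s (k+4) := by
      have h := D_step s (k+4)
      rw [a_congr (show (s+(k+4)+1) % 4 = (s+k+1) % 4 by omega)] at h
      rw [show k+6 = k+4+2 by ring]
      exact h
    have e3 : D s (k+2) = a (s+k+1) * D s (k+1) - D s k := D_step s k
    show D s (k+2+8) = 30 * D s (k+2+4) - D s (k+2)
    rw [show k+2+8 = k+10 by ring, show k+2+4 = k+6 by ring, e1, e2, e3,
      show k+9 = k+1+8 by ring, show k+5 = k+1+4 by ring, ih1, ih2]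
    ring

lemma u_step (m : ℕ) : u (m+2) = 30 * u (m+1) - u m := rfl

lemma Dclosed (s r : ℕ) : ∀ m,
    D s (4*m+r) = D s r * u (m+1) + (D s (4+r) - 30 * D s r) * u m := by
  refine two_step ?_ ?_ ?_
  · show D s (4*0+r) = D s r * u 1 + (D s (4+r) - 30 * D s r) * u 0
    rw [show 4*0+r = r by ring]
    show D s r = D s r * 1 + (D s (4+r) - 30 * D s r) * 0
    ring
  · show D s (4*1+r) = D s r * u 2 + (D s (4+r) - 30 * D s r) * u 1
    rw [show 4*1+r = 4+r by ring]
    show D s (4+r) = D s r * u 2 + (D s (4+r) - 30 * D s r) * u 1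
    rw [show u 2 = 30 * u 1 - u 0 from rfl]
    show D s (4+r) = D s r * (30 * 1 - 0) + (D s (4+r) - 30 * D s r) * 1
    ring
  · intro m ih1 ih2
    have e : D s (4*(m+2)+r) = 30 * D s (4*(m+1)+r) - D s (4*m+r) := by
      have h := Drec s (4*m+r)
      rw [show 4*m+r+8 = 4*(m+2)+r by ring, show 4*m+r+4 = 4*(m+1)+r by ring] at h
      exact h
    rw [e, ih1, ih2, u_step (m+1), u_step m]
    ring

lemma s14 : Real.sqrt 14 ^ 2 = 14 := Real.sq_sqrt (by norm_num)

lemma s14_nonneg : 0 ≤ Real.sqrt 14 := Real.sqrt_nonneg 14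

lemma mu_sq : mu ^ 2 = 30 * mu - 1 := by
  have h := s14
  unfold mu; nlinarith [h]

lemma nu_sq : nu ^ 2 = 30 * nu - 1 := by
  have h := s14
  unfold nu; nlinarith [h]

lemma nu_pos : 0 < nu := by
  have h := s14
  have h2 := s14_nonneg
  unfold nu; nlinarith

lemma mu_gt_one : 1 < mu := by
  have h2 := s14_nonneg
  unfold mu; nlinarith

lemma mu_mul_nu : mu * nu = 1 := by
  have h := s14
  unfold mu nu; nlinarith

lemma pows : ∀ m : ℕ, mu ^ m - nu ^ m = 8 * Real.sqrt 14 * u m ∧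
    mu ^ m + nu ^ m = 2 * u (m+1) - 30 * u m := by
  refine two_step ?_ ?_ ?_
  · constructor
    · show mu ^ 0 - nu ^ 0 = 8 * Real.sqrt 14 * (0:ℝ)
      norm_num
    · show mu ^ 0 + nu ^ 0 = 2 * (1:ℝ) - 30 * (0:ℝ)
      norm_num
  · constructor
    · show mu ^ 1 - nu ^ 1 = 8 * Real.sqrt 14 * (1:ℝ)
      unfold mu nu; ring
    · show mu ^ 1 + nu ^ 1 = 2 * u 2 - 30 * (1:ℝ)
      rw [show u 2 = 30 * u 1 - u 0 from rfl,
        show u 1 = (1:ℝ) from rfl, show u 0 = (0:ℝ) from rfl]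
      unfold mu nu; ring
  · intro m ih1 ih2
    have hmu : mu ^ (m+2) = 30 * mu ^ (m+1) - mu ^ m := by
      calc mu ^ (m+2) = mu ^ 2 * mu ^ m := by ring
      _ = (30 * mu - 1) * mu ^ m := by rw [mu_sq]
      _ = 30 * mu ^ (m+1) - mu ^ m := by ring
    have hnu : nu ^ (m+2) = 30 * nu ^ (m+1) - nu ^ m := by
      calc nu ^ (m+2) = nu ^ 2 * nu ^ m := by ring
      _ = (30 * nu - 1) * nu ^ m := by rw [nu_sq]
      _ = 30 * nu ^ (m+1) - nu ^ m := by ring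
    constructor
    · rw [hmu, hnu, u_step m]
      have := ih1.1; have := ih2.1
      linarith
    · have e2 := u_step m
      have e3 : u (m+3) = 30 * u (m+2) - u (m+1) := by
        rw [show m+3 = m+1+2 by ring]; exact u_step (m+1)
      have h1 := ih1.2
      have h2 := ih2.2
      rw [show m+1+1 = m+2 by ring] at h2
      rw [hmu, hnu, show m+2+1 = m+3 by ring, e3]
      linarith

lemma V_pos (n : ℕ) (hn : 1 ≤ n) : 0 < mu ^ n + nu ^ n - 2 := by
  have ht : 1 < mu ^ n := one_lt_pow₀ mu_gt_one (by omega)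
  have htn : 0 < nu ^ n := pow_pos nu_pos n
  have hprod : mu ^ n * nu ^ n = 1 := by
    rw [← mul_pow, mu_mul_nu, one_pow]
  nlinarith [sq_nonneg (mu ^ n - nu ^ n)]

set_option maxHeartbeats 1600000 in
lemma diag_id (m jv : ℕ) :
    a jv * D (jv+1) (4*m+3) - D (jv+1) (4*m+2) - D (jv+2) (4*m+2) - 2
      = 30 * u (m+1) - 2 * u m - 2 := by
  have hr : jv % 4 < 4 := Nat.mod_lt _ (by norm_num)
  have h1 : (jv+1) % 4 = (jv % 4 + 1) % 4 := by omega
  have h2 : (jv+2) % 4 = (jv % 4 + 2) % 4 := by omega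
  rw [a_congr (show jv % 4 = (jv % 4) % 4 by omega),
    D_congr h1 (4*m+3), D_congr h1 (4*m+2), D_congr h2 (4*m+2)]
  set r := jv % 4 with hrdef
  clear_value r
  interval_cases r <;>
    rw [Dclosed _ 3 m, Dclosed _ 2 m, Dclosed _ 2 m] <;> norm_num [D, a] <;> ring

lemma trace_id (m : ℕ) :
    D 1 (4*m+3) + D 2 (4*m+3) + D 3 (4*m+3) + D 4 (4*m+3) = 72 * u (m+1) := by
  rw [Dclosed 1 3 m, Dclosed 2 3 m, Dclosed 3 3 m, Dclosed 4 3 m]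
  norm_num [D, a]
  ring

/-- cyclic predecessor -/
def imF {N : ℕ} (i : Fin N) : Fin N :=
  ⟨if i.val = 0 then N - 1 else i.val - 1, by have := i.isLt; split_ifs <;> omega⟩

/-- cyclic successor -/
def ipF {N : ℕ} (i : Fin N) : Fin N :=
  ⟨if i.val = N - 1 then 0 else i.val + 1, by have := i.isLt; split_ifs <;> omega⟩

/-- cyclic distance from `a` to `b` in `ZMod (4n)`, as a natural number. -/
def dd (n a b : ℕ) : ℕ := if a ≤ b then b - a else b + 4 * n - a

lemma dd_spec {n x y : ℕ} (hx : x < 4*n) (hy : y < 4*n) :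
    dd n x y < 4*n ∧ (x + dd n x y = y ∨ x + dd n x y = y + 4*n) := by
  unfold dd; split_ifs <;> omega

/-- candidate for `det • (LS' n)⁻¹`. -/
noncomputable def Bm (n : ℕ) : Matrix (Fin (4*n)) (Fin (4*n)) ℝ :=
  Matrix.of fun i j =>
    D (j.val+1) (4*n - 1 - dd n i.val j.val) +
      (if dd n i.val j.val = 0 then 0 else D (i.val+1) (dd n i.val j.val - 1))

lemma LS_diag (n : ℕ) (i : Fin (4*n)) : LS' n i i = a i.val := by
  simp only [LS', Matrix.of_apply, if_pos rfl, a]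
  split_ifs <;> first | rfl | omega

lemma LS_im (n : ℕ) (hn : 1 ≤ n) (i : Fin (4*n)) : LS' n i (imF i) = -1 := by
  have hi := i.isLt
  simp only [LS', Matrix.of_apply, imF]
  split_ifs <;> first | rfl | omega

lemma LS_ip (n : ℕ) (hn : 1 ≤ n) (i : Fin (4*n)) : LS' n i (ipF i) = -1 := by
  have hi := i.isLt
  simp only [LS', Matrix.of_apply, ipF]
  split_ifs <;> first | rfl | omega

lemma LS_zero (n : ℕ) (hn : 1 ≤ n) (i k : Fin (4*n)) (h0 : k ≠ i) (h1 : k ≠ imF i)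
    (h2 : k ≠ ipF i) : LS' n i k = 0 := by
  have hi := i.isLt
  have hk := k.isLt
  rw [Fin.ne_iff_vne] at h0 h1 h2
  simp only [imF, ipF] at h1 h2
  simp only [LS', Matrix.of_apply]
  split_ifs at h1 h2 ⊢ <;> first | rfl | omega

lemma rowsum (n : ℕ) (hn : 1 ≤ n) (f : Fin (4*n) → ℝ) (i : Fin (4*n)) :
    ∑ k, LS' n i k * f k = a i.val * f i - f (imF i) - f (ipF i) := by
  have hi := i.isLt
  have h1 : (imF i).val ≠ i.val := by simp only [imF]; split_ifs <;> omega
  have h2 : (ipF i).val ≠ i.val := by simp only [ipF]; split_ifs <;> omega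
  have h3 : (imF i).val ≠ (ipF i).val := by
    simp only [imF, ipF]; split_ifs <;> omega
  have e : ∑ k ∈ ({imF i, ipF i, i} : Finset (Fin (4*n))), LS' n i k * f k
      = ∑ k, LS' n i k * f k := by
    refine Finset.sum_subset (Finset.subset_univ _) ?_
    intro k _ hk
    simp only [Finset.mem_insert, Finset.mem_singleton, not_or] at hk
    rw [LS_zero n hn i k hk.2.2 hk.1 hk.2.1, zero_mul]
  rw [← e]
  rw [Finset.sum_insert (by
        simp only [Finset.mem_insert, Finset.mem_singleton, not_or]
        exact ⟨fun h => h3 (congrArg Fin.val h), fun h => h1 (congrArg Fin.val h)⟩),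
      Finset.sum_insert (by
        simp only [Finset.mem_singleton]
        exact fun h => h2 (congrArg Fin.val h)),
      Finset.sum_singleton]
  rw [LS_im n hn i, LS_ip n hn i, LS_diag n i]
  ring

lemma D_zero (s : ℕ) : D s 0 = 1 := rfl

set_option maxHeartbeats 1600000 in
lemma mul_B (n m : ℕ) (hm : n = m + 1) :
    LS' n * Bm n
      = (30 * u (m+1) - 2 * u m - 2) • (1 : Matrix (Fin (4*n)) (Fin (4*n)) ℝ) := by
  subst hm
  ext i j
  have hi := i.isLt
  have hj := j.isLt
  rw [Matrix.mul_apply, rowsum (m+1) (by omega) (fun k => Bm (m+1) k j) i]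
  have him : (imF i).val = if i.val = 0 then 4*(m+1) - 1 else i.val - 1 := rfl
  have hip : (ipF i).val = if i.val = 4*(m+1) - 1 then 0 else i.val + 1 := rfl
  rw [show (if i.val = 0 then 4*(m+1) - 1 else i.val - 1) =
      (if i.val = 0 then 4*(m+1) - 1 else i.val - 1) from rfl] at him
  have him' : (i.val = 0 ∧ (imF i).val = 4*(m+1) - 1) ∨ (1 ≤ i.val ∧ (imF i).val + 1 = i.val) := by
    rw [him]; split_ifs <;> omega
  have hip' : (i.val = 4*(m+1) - 1 ∧ (ipF i).val = 0) ∨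
      (i.val + 2 ≤ 4*(m+1) ∧ (ipF i).val = i.val + 1) := by
    rw [hip]; split_ifs <;> omega
  clear him hip
  have himlt := (imF i).isLt
  have hiplt := (ipF i).isLt
  simp only [Bm, Matrix.of_apply, Matrix.smul_apply, Matrix.one_apply, smul_eq_mul]
  have S0 := dd_spec (n := m+1) hi hj
  have S1 := dd_spec (n := m+1) himlt hj
  have S2 := dd_spec (n := m+1) hiplt hj
  set d0 := dd (m+1) i.val j.val with hd0
  set d1 := dd (m+1) (imF i).val j.val with hd1
  set d2 := dd (m+1) (ipF i).val j.val with hd2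
  clear_value d0 d1 d2
  by_cases hc0 : d0 = 0
  · -- diagonal entry
    have hij : i = j := Fin.ext (by omega)
    rw [if_pos hij, mul_one, if_pos hc0]
    have e1 : d1 = 1 := by omega
    have e2 : d2 = 4*(m+1) - 1 := by omega
    rw [e1, e2, hc0, if_neg (by norm_num : ¬(1:ℕ) = 0),
      if_neg (show ¬(4*(m+1) - 1 = 0) by omega)]
    rw [show 4*(m+1) - 1 - 0 = 4*m+3 by omega, show 4*(m+1) - 1 - 1 = 4*m+2 by omega,
      show 4*(m+1) - 1 - (4*(m+1) - 1) = 0 by omega, show (1:ℕ) - 1 = 0 from rfl,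
      D_zero, D_zero]
    have hji : j.val = i.val := by omega
    rw [D_congr (show ((ipF i).val + 1) % 4 = (j.val + 2) % 4 by omega) (4*m+2)]
    have hd := diag_id m j.val
    rw [a_congr (show i.val % 4 = j.val % 4 by omega)]
    linarith [hd]
  · have hij : ¬ i = j := fun h => hc0 (by have := congrArg Fin.val h; omega)
    rw [if_neg hij, mul_zero, if_neg hc0]
    by_cases hc1 : d0 = 1
    · have e1 : d1 = 2 := by omega
      have e2 : d2 = 0 := by omega
      rw [e1, e2, hc1, if_neg (by norm_num : ¬(2:ℕ) = 0), if_pos rfl]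
      rw [show 4*(m+1) - 1 - 1 = 4*(m+1)-2 by omega, show 4*(m+1) - 1 - 2 = 4*(m+1)-3 by omega,
        show 4*(m+1) - 1 - 0 = 4*(m+1)-1 by omega, show (1:ℕ) - 1 = 0 from rfl,
        show (2:ℕ) - 1 = 1 from rfl, D_zero, D_one]
      have hrec : D (j.val+1) (4*(m+1)-1)
          = a i.val * D (j.val+1) (4*(m+1)-2) - D (j.val+1) (4*(m+1)-3) := by
        have h := D_step (j.val+1) (4*(m+1)-3)
        rw [a_congr (show (j.val+1+(4*(m+1)-3)+1) % 4 = i.val % 4 by omega)] at h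
        rw [show 4*(m+1)-3+2 = 4*(m+1)-1 by omega, show 4*(m+1)-3+1 = 4*(m+1)-2 by omega] at h
        exact h
      rw [hrec, a_congr (show ((imF i).val + 1) % 4 = i.val % 4 by omega)]
      ring
    · by_cases hcN : d0 = 4*(m+1) - 1
      · have e1 : d1 = 0 := by omega
        have e2 : d2 = 4*(m+1) - 2 := by omega
        rw [e1, e2, hcN, if_pos rfl, if_neg (show ¬(4*(m+1)-2 = 0) by omega)]
        rw [show 4*(m+1) - 1 - (4*(m+1) - 1) = 0 by omega,
          show 4*(m+1) - 1 - 0 = 4*(m+1)-1 by omega,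
          show 4*(m+1) - 1 - (4*(m+1) - 2) = 1 by omega,
          show 4*(m+1) - 1 - 1 = 4*(m+1)-2 by omega,
          show 4*(m+1) - 2 - 1 = 4*(m+1)-3 by omega, D_zero, D_one]
        have hrec : D (j.val+1) (4*(m+1)-1)
            = a i.val * D (i.val+1) (4*(m+1)-2) - D (i.val+2) (4*(m+1)-3) := by
          have h := D_left i.val (4*(m+1)-3)
          rw [show 4*(m+1)-3+2 = 4*(m+1)-1 by omega, show 4*(m+1)-3+1 = 4*(m+1)-2 by omega] at h
          rw [D_congr (show (j.val+1) % 4 = i.val % 4 by omega) (4*(m+1)-1)]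
          exact h
        rw [hrec, a_congr (show (j.val + 1) % 4 = i.val % 4 by omega),
          D_congr (show ((ipF i).val + 1) % 4 = (i.val + 2) % 4 by omega) (4*(m+1)-3)]
        ring
      · -- generic case : 2 ≤ d0 ≤ 4(m+1) - 2
        have e1 : d1 = d0 + 1 := by omega
        have e2 : d2 = d0 - 1 := by omega
        rw [e1, e2, if_neg (show ¬ d0 + 1 = 0 by omega), if_neg (show ¬ d0 - 1 = 0 by omega)]
        rw [show 4*(m+1) - 1 - (d0+1) = 4*(m+1)-2-d0 by omega,
          show 4*(m+1) - 1 - (d0-1) = 4*(m+1)-d0 by omega,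
          show d0 + 1 - 1 = d0 from rfl, show d0 - 1 - 1 = d0 - 2 by omega]
        have hrec1 : D (j.val+1) (4*(m+1)-d0)
            = a i.val * D (j.val+1) (4*(m+1)-1-d0) - D (j.val+1) (4*(m+1)-2-d0) := by
          have h := D_step (j.val+1) (4*(m+1)-2-d0)
          rw [a_congr (show (j.val+1+(4*(m+1)-2-d0)+1) % 4 = i.val % 4 by omega)] at h
          rw [show 4*(m+1)-2-d0+2 = 4*(m+1)-d0 by omega,
            show 4*(m+1)-2-d0+1 = 4*(m+1)-1-d0 by omega] at h
          exact h
        have hrec2 : D ((imF i).val+1) d0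
            = a i.val * D (i.val+1) (d0-1) - D (i.val+2) (d0-2) := by
          have h := D_left i.val (d0-2)
          rw [show d0-2+2 = d0 by omega, show d0-2+1 = d0-1 by omega] at h
          rw [D_congr (show ((imF i).val+1) % 4 = i.val % 4 by omega) d0]
          exact h
        rw [hrec1, hrec2,
          D_congr (show ((ipF i).val + 1) % 4 = (i.val + 2) % 4 by omega) (d0-2)]
        ring

lemma herm (n : ℕ) : (LS' n).IsHermitian := by
  ext i j
  rw [Matrix.conjTranspose_apply, star_trivial]
  simp only [LS', Matrix.of_apply]
  split_ifs <;> first | rfl | omega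

lemma a_ge (s : ℕ) : (2:ℝ) ≤ a s := by unfold a; split_ifs <;> norm_num

lemma a_zero : a 0 = 4 := by norm_num [a]

lemma imF_ipF {N : ℕ} (i : Fin N) : imF (ipF i) = i := by
  apply Fin.ext
  have hlt := i.isLt
  have h1 : (ipF i).val = if i.val = N-1 then 0 else i.val+1 := rfl
  have h2 : (imF (ipF i)).val = if (ipF i).val = 0 then N-1 else (ipF i).val - 1 := rfl
  rw [h2, h1]
  split_ifs <;> first | omega | (cases ‹False›)

lemma ipF_imF {N : ℕ} (i : Fin N) : ipF (imF i) = i := by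
  apply Fin.ext
  have hlt := i.isLt
  have h1 : (imF i).val = if i.val = 0 then N-1 else i.val - 1 := rfl
  have h2 : (ipF (imF i)).val = if (imF i).val = N-1 then 0 else (imF i).val + 1 := rfl
  rw [h2, h1]
  split_ifs <;> first | omega | (cases ‹False›)

/-- the cyclic shift as an equivalence -/
def shiftE (N : ℕ) : Fin N ≃ Fin N where
  toFun := ipF
  invFun := imF
  left_inv := imF_ipF
  right_inv := ipF_imF

lemma quad_form (n : ℕ) (hn : 1 ≤ n) (x : Fin (4*n) → ℝ) :
    ∑ i, x i * (a i.val * x i - x (imF i) - x (ipF i))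
      = ∑ i, ((x i - x (ipF i))^2 + (a i.val - 2) * x i^2) := by
  have h1 : ∑ i, x i * x (imF i) = ∑ i, x i * x (ipF i) := by
    have h : ∑ i, x (ipF i) * x (imF (ipF i)) = ∑ i, x i * x (imF i) :=
      Equiv.sum_comp (shiftE (4*n)) (fun j => x j * x (imF j))
    have h' : ∑ i, x (ipF i) * x (imF (ipF i)) = ∑ i, x i * x (ipF i) :=
      Finset.sum_congr rfl fun i _ => by rw [imF_ipF, mul_comm]
    rw [← h, h']
  have h2 : ∑ i, x (ipF i)^2 = ∑ i, x i^2 :=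
    Equiv.sum_comp (shiftE (4*n)) (fun j => x j ^ 2)
  have l1 : ∀ i : Fin (4*n), x i * (a i.val * x i - x (imF i) - x (ipF i))
      = a i.val * x i^2 - x i * x (imF i) - x i * x (ipF i) := fun i => by ring
  have l2 : ∀ i : Fin (4*n), (x i - x (ipF i))^2 + (a i.val - 2) * x i^2
      = (a i.val * x i^2 + x (ipF i)^2) - (x i * x (ipF i) + x i * x (ipF i)) - x i^2 :=
    fun i => by ring
  rw [Finset.sum_congr rfl fun i _ => l1 i, Finset.sum_congr rfl fun i _ => l2 i,
    Finset.sum_sub_distrib, Finset.sum_sub_distrib, Finset.sum_sub_distrib,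
    Finset.sum_sub_distrib, Finset.sum_add_distrib, Finset.sum_add_distrib, h1, h2]
  ring

open Matrix in
lemma posdef (n : ℕ) (hn : 1 ≤ n) : (LS' n).PosDef := by
  refine Matrix.PosDef.of_dotProduct_mulVec_pos (herm n) ?_
  intro x hx
  have hsx : star x = x := by
    funext i; exact star_trivial _
  rw [hsx]
  have hmv : ∀ i, (LS' n *ᵥ x) i = a i.val * x i - x (imF i) - x (ipF i) := by
    intro i
    show (fun j => LS' n i j) ⬝ᵥ x = _
    simp only [dotProduct]
    exact rowsum n hn x i
  have hdot : x ⬝ᵥ (LS' n *ᵥ x) = ∑ i, x i * (a i.val * x i - x (imF i) - x (ipF i)) := by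
    simp only [dotProduct]
    exact Finset.sum_congr rfl fun i _ => by rw [hmv i]
  rw [hdot, quad_form n hn x]
  by_contra hle
  push_neg at hle
  have hterm : ∀ i ∈ Finset.univ, (0:ℝ) ≤ (x i - x (ipF i))^2 + (a i.val - 2) * x i^2 := by
    intro i _
    have := a_ge i.val
    nlinarith [sq_nonneg (x i - x (ipF i)), sq_nonneg (x i)]
  have hzero : ∑ i, ((x i - x (ipF i))^2 + (a i.val - 2) * x i^2) = 0 :=
    le_antisymm hle (Finset.sum_nonneg hterm)
  have heach := (Finset.sum_eq_zero_iff_of_nonneg hterm).mp hzero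
  have hstep : ∀ i, x (ipF i) = x i := by
    intro i
    have h := heach i (Finset.mem_univ i)
    have ha := a_ge i.val
    have hsq : (x i - x (ipF i))^2 = 0 := by
      nlinarith [sq_nonneg (x i - x (ipF i)), sq_nonneg (x i)]
    have := pow_eq_zero_iff (n := 2) (by norm_num) |>.mp hsq
    linarith [sub_eq_zero.mp this]
  have h0lt : 0 < 4*n := by omega
  have hx0 : x ⟨0, h0lt⟩ = 0 := by
    have h := heach ⟨0, h0lt⟩ (Finset.mem_univ _)
    have ha : a ((⟨0, h0lt⟩ : Fin (4*n)).val) = 4 := a_zero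
    rw [ha] at h
    have hsq : x ⟨0, h0lt⟩^2 = 0 := by
      nlinarith [sq_nonneg (x ⟨0, h0lt⟩ - x (ipF ⟨0, h0lt⟩)), sq_nonneg (x ⟨0, h0lt⟩)]
    exact pow_eq_zero_iff (n := 2) (by norm_num) |>.mp hsq
  have hall : ∀ k, ∀ hk : k < 4*n, x ⟨k, hk⟩ = 0 := by
    intro k
    induction k with
    | zero => intro hk; exact hx0
    | succ k ih =>
      intro hk
      have hk' : k < 4*n := by omega
      have hipk : ipF ⟨k, hk'⟩ = ⟨k+1, hk⟩ := by
        apply Fin.ext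
        show (if k = 4*n-1 then 0 else k+1) = k+1
        rw [if_neg (by omega)]
      have h := hstep ⟨k, hk'⟩
      rw [hipk] at h
      rw [h, ih hk']
  exact hx (funext fun i => by
    have := hall i.val i.isLt
    simpa using this)

lemma periodic_add (f : ℕ → ℝ) (hf : ∀ i, f (i+4) = f i) : ∀ q r, f (r + 4*q) = f r := by
  intro q
  induction q with
  | zero => intro r; norm_num
  | succ q ih =>
    intro r
    rw [show r + 4*(q+1) = (r + 4*q) + 4 by ring, hf, ih]

lemma sum_periodic (f : ℕ → ℝ) (hf : ∀ i, f (i+4) = f i) (q : ℕ) :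
    ∑ i ∈ Finset.range (4*q), f i = q * (f 0 + f 1 + f 2 + f 3) := by
  induction q with
  | zero => simp
  | succ q ih =>
    have e0 : f (4*q) = f 0 := by
      rw [show 4*q = 0 + 4*q by ring]; exact periodic_add f hf q 0
    have e1 : f (4*q+1) = f 1 := by
      rw [show 4*q+1 = 1 + 4*q by ring]; exact periodic_add f hf q 1
    have e2 : f (4*q+1+1) = f 2 := by
      rw [show 4*q+1+1 = 2 + 4*q by ring]; exact periodic_add f hf q 2
    have e3 : f (4*q+1+1+1) = f 3 := by
      rw [show 4*q+1+1+1 = 3 + 4*q by ring]; exact periodic_add f hf q 3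
    rw [show 4*(q+1) = (4*q)+1+1+1+1 by ring, Finset.sum_range_succ, Finset.sum_range_succ,
      Finset.sum_range_succ, Finset.sum_range_succ, ih, e0, e1, e2, e3]
    push_cast
    ring

lemma trace_B (n m : ℕ) (hm : n = m+1) : (Bm n).trace = (n:ℝ) * (72 * u (m+1)) := by
  subst hm
  rw [Matrix.trace]
  have hdiag : ∀ i : Fin (4*(m+1)), (Bm (m+1)).diag i = D (i.val+1) (4*(m+1)-1) := by
    intro i
    show D (i.val+1) (4*(m+1) - 1 - dd (m+1) i.val i.val) +
      (if dd (m+1) i.val i.val = 0 then 0 else D (i.val+1) (dd (m+1) i.val i.val - 1))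
      = D (i.val+1) (4*(m+1)-1)
    have h0 : dd (m+1) i.val i.val = 0 := by unfold dd; rw [if_pos (le_refl _)]; omega
    rw [h0, if_pos rfl]
    norm_num
  rw [Finset.sum_congr rfl fun i _ => hdiag i]
  have hper : ∀ i : ℕ, (fun i => D (i+1) (4*(m+1)-1)) (i+4) = (fun i => D (i+1) (4*(m+1)-1)) i := by
    intro i
    exact D_congr (show (i+4+1) % 4 = (i+1) % 4 by omega) _
  have := sum_periodic (fun i => D (i+1) (4*(m+1)-1)) hper (m+1)
  rw [Fin.sum_univ_eq_sum_range (fun i => D (i+1) (4*(m+1)-1)) (4*(m+1)), this]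
  have htr := trace_id m
  rw [show 4*(m+1)-1 = 4*m+3 by omega]
  simp only [show (0:ℕ)+1 = 1 from rfl, show (1:ℕ)+1 = 2 from rfl,
    show (2:ℕ)+1 = 3 from rfl, show (3:ℕ)+1 = 4 from rfl]
  push_cast
  linear_combination ((m:ℝ)+1) * htr

open Matrix in
lemma sum_inv_eig {N : ℕ} (A : Matrix (Fin N) (Fin N) ℝ) (hA : A.PosDef)
    (hH : A.IsHermitian) :
    ∑ j, (hH.eigenvalues j)⁻¹ = (A⁻¹).trace := by
  set U : Matrix (Fin N) (Fin N) ℝ := (hH.eigenvectorUnitary : Matrix (Fin N) (Fin N) ℝ)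
    with hU
  have hU1 : U * star U = 1 := Matrix.mem_unitaryGroup_iff.mp hH.eigenvectorUnitary.2
  have hU2 : star U * U = 1 := Matrix.mem_unitaryGroup_iff'.mp hH.eigenvectorUnitary.2
  set Dg : Matrix (Fin N) (Fin N) ℝ := Matrix.diagonal (RCLike.ofReal ∘ hH.eigenvalues)
    with hDg
  set Dg' : Matrix (Fin N) (Fin N) ℝ := Matrix.diagonal (fun i => (hH.eigenvalues i)⁻¹)
    with hDg'
  have hDD : Dg * Dg' = 1 := by
    rw [hDg, hDg', Matrix.diagonal_mul_diagonal]
    have hfun : (fun i => (RCLike.ofReal ∘ hH.eigenvalues) i * (hH.eigenvalues i)⁻¹)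
        = fun _ => (1:ℝ) := by
      funext i
      show hH.eigenvalues i * (hH.eigenvalues i)⁻¹ = 1
      exact mul_inv_cancel₀ (ne_of_gt (hA.eigenvalues_pos i))
    rw [hfun]
    exact Matrix.diagonal_one
  have hAC : A * (U * Dg' * star U) = 1 := by
    conv_lhs => rw [hH.spectral_theorem]
    calc (U * Dg * star U) * (U * Dg' * star U)
        = U * Dg * (star U * U) * Dg' * star U := by
          simp only [Matrix.mul_assoc]
      _ = U * (Dg * Dg') * star U := by rw [hU2]; simp only [Matrix.mul_assoc, Matrix.one_mul]
      _ = 1 := by rw [hDD, Matrix.mul_one, hU1]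
  rw [Matrix.inv_eq_right_inv hAC, Matrix.trace_mul_cycle, hU2,
    Matrix.one_mul, Matrix.trace_diagonal]

end Stmt9

theorem stmt_9 (n : ℕ) (hn : 1 ≤ n) :
    (LS' n).PosDef ∧
      ∀ hH : (LS' n).IsHermitian,
        ∑ j : Fin (4 * n), (hH.eigenvalues j)⁻¹
          = (9 * n * Real.sqrt 14 / 14) * (mu ^ n - nu ^ n) / (mu ^ n + nu ^ n - 2) := by
  obtain ⟨m, rfl⟩ : ∃ m, n = m + 1 := ⟨n - 1, by omega⟩
  have hpd := Stmt9.posdef (m+1) (by omega)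
  refine ⟨hpd, ?_⟩
  intro hH
  have hVval : (30 * Stmt9.u (m+1) - 2 * Stmt9.u m - 2 : ℝ)
      = mu^(m+1) + nu^(m+1) - 2 := by
    have h := (Stmt9.pows (m+1)).2
    have h2 := Stmt9.u_step m
    rw [show m+1+1 = m+2 by ring] at h
    linarith
  have hVpos : (0:ℝ) < mu^(m+1) + nu^(m+1) - 2 := Stmt9.V_pos (m+1) (by omega)
  have hVne : (30 * Stmt9.u (m+1) - 2 * Stmt9.u m - 2 : ℝ) ≠ 0 := by
    rw [hVval]; exact ne_of_gt hVpos
  have hmul := Stmt9.mul_B (m+1) m rfl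
  have hACone : LS' (m+1) * ((30 * Stmt9.u (m+1) - 2 * Stmt9.u m - 2 : ℝ)⁻¹ •
      Stmt9.Bm (m+1)) = 1 := by
    rw [Matrix.mul_smul, hmul, smul_smul, inv_mul_cancel₀ hVne, one_smul]
  have hinv : (LS' (m+1))⁻¹ = (30 * Stmt9.u (m+1) - 2 * Stmt9.u m - 2 : ℝ)⁻¹ •
      Stmt9.Bm (m+1) := Matrix.inv_eq_right_inv hACone
  rw [Stmt9.sum_inv_eig (LS' (m+1)) hpd hH, hinv, Matrix.trace_smul,
    Stmt9.trace_B (m+1) m rfl, smul_eq_mul]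
  have hsub : mu^(m+1) - nu^(m+1) = 8 * Real.sqrt 14 * Stmt9.u (m+1) := (Stmt9.pows (m+1)).1
  rw [hsub, hVval]
  have h14 : Real.sqrt 14 * Real.sqrt 14 = 14 := Real.mul_self_sqrt (by norm_num)
  have hVne' : mu^(m+1) + nu^(m+1) - 2 ≠ 0 := ne_of_gt hVpos
  push_cast
  field_simp
  ring_nf
  rw [Real.sq_sqrt (show (0:ℝ) ≤ 14 by norm_num)]
  ring
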